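/- Let (Ω, μ) be a probability space and let H₁, G₁, H₂, G₂ : Ω → ℝ be nonnegative measurable functions with G₁ > 0 and G₂ > 0 almost everywhere, such that ω ↦ log(1 + H₁(ω)/G₁(ω)) and ω ↦ log(1 + H₂(ω)/G₂(ω)) are integrable, and H₁, H₂ integrable. Let T ≥ 2 be a natural number and ρ a real number with ρ² < 1. For P > 1 define R⁺(P) = (1/T)·(−log(1 − ρ²)) + S₁(P) + S₂(P), where for i = 1, 2, S_i(P) is the supremum over all measurable f : ℝ → ℝ with f ≥ 0 and ∫ f(H_i(ω)) dμ(ω) ≤ P of ∫ log(1 + f(H_i)·H_i/(1 + f(H_i)·G_i)) dμ; and define R_PD(P) as in Proposition 1 with the power split P₁ = P − √P, P₂ = √P/(T−1), α = P₁/(P₁+1): R_PD(P) = (1/T)·(−log(1 − α²ρ²)) + ((T−1)/T)·( ∫ log(1 + P₂H₁/(1 + P₂G₁)) dμ − log(1 + P₂/(1+P₁)) + ∫ log(1 + P₂H₂/(1 + P₂G₂)) dμ − log(1 + P₂/(1+P₁)) ). Then R⁺(P) − R_PD(P) tends to γ/T as P tends to infinity, where γ = ∫ log(1 + H₁/G₁)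 dμ + ∫ log(1 + H₂/G₂) dμ. -/

import Mathlib

section Helpers
open Filter MeasureTheory

lemma sqrtAtTop : Tendsto Real.sqrt atTop atTop := by
  apply tendsto_atTop_atTop.2
  intro b
  refine ⟨b ^ 2, fun a ha => ?_⟩
  nlinarith [Real.sq_sqrt (le_trans (sq_nonneg b) ha), Real.sqrt_nonneg a]

/-- pointwise bound: for t ≥ 0, H ≥ 0, G > 0: 0 ≤ t*H/(1+t*G) ≤ H/G -/
lemma ratio_bounds {t H G : ℝ} (ht : 0 ≤ t) (hH : 0 ≤ H) (hG : 0 < G) :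
    0 ≤ t * H / (1 + t * G) ∧ t * H / (1 + t * G) ≤ H / G := by
  have hd : (0:ℝ) < 1 + t * G := by positivity
  constructor
  · positivity
  · rw [div_le_div_iff₀ hd hG]
    nlinarith

/-- the DCT lemma -/
lemma aux_tendsto_integral {Ω : Type*} [MeasurableSpace Ω] (μ : Measure Ω) [IsProbabilityMeasure μ]
    (H G : Ω → ℝ) (hHm : Measurable H) (hGm : Measurable G)
    (hH : ∀ ω, 0 ≤ H ω) (hG : ∀ ω, 0 ≤ G ω) (hGpos : ∀ᵐ ω ∂μ, 0 < G ω)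
    (hint : Integrable (fun ω => Real.log (1 + H ω / G ω)) μ)
    {c : ℝ → ℝ} (hc : Tendsto c atTop atTop) :
    Tendsto (fun P => ∫ ω, Real.log (1 + c P * H ω / (1 + c P * G ω)) ∂μ) atTop
      (nhds (∫ ω, Real.log (1 + H ω / G ω) ∂μ)) := by
  apply tendsto_integral_filter_of_dominated_convergence
    (fun ω => Real.log (1 + H ω / G ω))
  · filter_upwards with P
    exact ((Real.measurable_log.comp ((measurable_const.add
      (((measurable_const.mul hHm).div (measurable_const.add (measurable_const.mul hGm))))))).aestronglyMeasurable)
  · filter_upwards [hc.eventually_ge_atTop 0] with P hP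
    filter_upwards [hGpos] with ω hGω
    obtain ⟨h0, h1⟩ := ratio_bounds hP (hH ω) hGω
    rw [Real.norm_eq_abs, abs_of_nonneg (Real.log_nonneg (by linarith))]
    apply Real.log_le_log (by linarith) (by linarith)
  · exact hint
  · filter_upwards [hGpos] with ω hGω
    have key : Tendsto (fun t : ℝ => Real.log (1 + t * H ω / (1 + t * G ω))) atTop
        (nhds (Real.log (1 + H ω / G ω))) := by
      have h1 : Tendsto (fun t : ℝ => 1 + H ω / (t⁻¹ + G ω)) atTop
          (nhds (1 + H ω / (0 + G ω))) := by
        apply tendsto_const_nhds.add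
        exact tendsto_const_nhds.div (tendsto_inv_atTop_zero.add tendsto_const_nhds)
          (by positivity)
      have h2 : Tendsto (fun t : ℝ => 1 + t * H ω / (1 + t * G ω)) atTop
          (nhds (1 + H ω / G ω)) := by
        rw [show (1 + H ω / G ω) = 1 + H ω / (0 + G ω) by ring_nf]
        apply h1.congr'
        filter_upwards [eventually_gt_atTop 0] with t ht
        have ht' : t ≠ 0 := ne_of_gt ht
        have hd : (0:ℝ) < 1 + t * G ω := by nlinarith [hG ω]
        have hd2 : (0:ℝ) < t⁻¹ + G ω := by positivity
        field_simp
      have hq : 0 ≤ H ω / G ω := div_nonneg (hH ω) hGω.le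
      have hcont : ContinuousAt Real.log (1 + H ω / G ω) :=
        Real.continuousAt_log (by intro h; linarith)
      exact hcont.tendsto.comp h2
    exact key.comp hc

lemma aux_S_tendsto {Ω : Type*} [MeasurableSpace Ω] (μ : Measure Ω) [IsProbabilityMeasure μ]
    (H G : Ω → ℝ) (hHm : Measurable H) (hGm : Measurable G)
    (hH : ∀ ω, 0 ≤ H ω) (hG : ∀ ω, 0 ≤ G ω) (hGpos : ∀ᵐ ω ∂μ, 0 < G ω)
    (hint : Integrable (fun ω => Real.log (1 + H ω / G ω)) μ)
    (S : ℝ → ℝ)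
    (hS : ∀ P : ℝ, S P =
      sSup {r : ℝ | ∃ f : ℝ → ℝ, Measurable f ∧ (∀ x, 0 ≤ f x) ∧
        (∫ ω, f (H ω) ∂μ) ≤ P ∧
        r = ∫ ω, Real.log (1 + f (H ω) * H ω / (1 + f (H ω) * G ω)) ∂μ}) :
    Tendsto S atTop (nhds (∫ ω, Real.log (1 + H ω / G ω) ∂μ)) := by
  set γ := ∫ ω, Real.log (1 + H ω / G ω) ∂μ with hγ
  have hub : ∀ P : ℝ, ∀ r ∈ {r : ℝ | ∃ f : ℝ → ℝ, Measurable f ∧ (∀ x, 0 ≤ f x) ∧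
      (∫ ω, f (H ω) ∂μ) ≤ P ∧
      r = ∫ ω, Real.log (1 + f (H ω) * H ω / (1 + f (H ω) * G ω)) ∂μ}, r ≤ γ := by
    rintro P r ⟨f, hfm, hf0, -, rfl⟩
    have hgm : AEStronglyMeasurable
        (fun ω => Real.log (1 + f (H ω) * H ω / (1 + f (H ω) * G ω))) μ :=
      (Real.measurable_log.comp (measurable_const.add
        (((hfm.comp hHm).mul hHm).div
          (measurable_const.add ((hfm.comp hHm).mul hGm))))).aestronglyMeasurable
    have hbd : ∀ᵐ ω ∂μ, ‖Real.log (1 + f (H ω) * H ω / (1 + f (H ω) * G ω))‖ ≤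
        Real.log (1 + H ω / G ω) := by
      filter_upwards [hGpos] with ω hGω
      obtain ⟨h0, h1⟩ := ratio_bounds (hf0 (H ω)) (hH ω) hGω
      rw [Real.norm_eq_abs, abs_of_nonneg (Real.log_nonneg (by linarith))]
      exact Real.log_le_log (by linarith) (by linarith)
    have hgint : Integrable
        (fun ω => Real.log (1 + f (H ω) * H ω / (1 + f (H ω) * G ω))) μ :=
      hint.mono' hgm hbd
    apply integral_mono_ae hgint hint
    filter_upwards [hbd] with ω hω
    exact (le_abs_self _).trans (by rwa [Real.norm_eq_abs] at hω)
  have hmem : ∀ P : ℝ, 0 ≤ P →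
      (∫ ω, Real.log (1 + P * H ω / (1 + P * G ω)) ∂μ) ∈
      {r : ℝ | ∃ f : ℝ → ℝ, Measurable f ∧ (∀ x, 0 ≤ f x) ∧
        (∫ ω, f (H ω) ∂μ) ≤ P ∧
        r = ∫ ω, Real.log (1 + f (H ω) * H ω / (1 + f (H ω) * G ω)) ∂μ} := by
    intro P hP
    refine ⟨fun _ => P, measurable_const, fun _ => hP, ?_, rfl⟩
    simp [measure_univ]
  have hL : Tendsto (fun P : ℝ => ∫ ω, Real.log (1 + P * H ω / (1 + P * G ω)) ∂μ)
      atTop (nhds γ) := by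
    have := aux_tendsto_integral μ H G hHm hGm hH hG hGpos hint (c := id) tendsto_id
    simpa using this
  apply tendsto_of_tendsto_of_tendsto_of_le_of_le' hL tendsto_const_nhds
  · filter_upwards [eventually_ge_atTop (0:ℝ)] with P hP
    rw [hS P]
    exact le_csSup ⟨γ, hub P⟩ (hmem P hP)
  · filter_upwards [eventually_ge_atTop (0:ℝ)] with P hP
    rw [hS P]
    exact csSup_le ⟨_, hmem P hP⟩ (hub P)

lemma aux_frac_tendsto : Tendsto (fun x : ℝ => x / (x + 1)) atTop (nhds 1) := by
  have h : Tendsto (fun x : ℝ => (1 + x⁻¹)⁻¹) atTop (nhds 1) := by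
    have := (tendsto_const_nhds.add tendsto_inv_atTop_zero :
      Tendsto (fun x : ℝ => 1 + x⁻¹) atTop (nhds (1 + 0))).inv₀ (by norm_num)
    simpa using this
  apply h.congr'
  filter_upwards [eventually_gt_atTop (0:ℝ)] with x hx
  have hx' : x ≠ 0 := ne_of_gt hx
  have : (0:ℝ) < x + 1 := by linarith
  field_simp

lemma aux_Psub_sqrt : Tendsto (fun P : ℝ => P - Real.sqrt P) atTop atTop := by
  apply tendsto_atTop_mono' atTop _ (tendsto_id.atTop_div_const (by norm_num : (0:ℝ) < 2))
  filter_upwards [eventually_ge_atTop (4:ℝ)] with P hP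
  have h0 : (0:ℝ) ≤ P := by linarith
  have hs := Real.sq_sqrt h0
  have hs0 := Real.sqrt_nonneg P
  simp only [id]
  nlinarith [sq_nonneg (Real.sqrt P - 2)]

lemma aux_alpha (ρ : ℝ) (hρ : ρ ^ 2 < 1) :
    Tendsto (fun P : ℝ =>
      -Real.log (1 - ((P - Real.sqrt P) / ((P - Real.sqrt P) + 1)) ^ 2 * ρ ^ 2)) atTop
      (nhds (-Real.log (1 - ρ ^ 2))) := by
  have halpha : Tendsto (fun P : ℝ => (P - Real.sqrt P) / ((P - Real.sqrt P) + 1)) atTop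
      (nhds 1) := aux_frac_tendsto.comp aux_Psub_sqrt
  have h2 : Tendsto (fun P : ℝ =>
      1 - ((P - Real.sqrt P) / ((P - Real.sqrt P) + 1)) ^ 2 * ρ ^ 2) atTop
      (nhds (1 - 1 ^ 2 * ρ ^ 2)) :=
    tendsto_const_nhds.sub ((halpha.pow 2).mul_const _)
  have hne : (1:ℝ) - 1 ^ 2 * ρ ^ 2 ≠ 0 := by norm_num; nlinarith
  have := ((Real.continuousAt_log hne).tendsto.comp h2).neg
  simpa using this

lemma aux_B (T : ℕ) (hT : 2 ≤ T) :
    Tendsto (fun P : ℝ =>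
      Real.log (1 + (Real.sqrt P / ((T : ℝ) - 1)) / (1 + (P - Real.sqrt P)))) atTop
      (nhds 0) := by
  have hT1 : (1:ℝ) ≤ (T:ℝ) - 1 := by
    have : (2:ℝ) ≤ (T:ℝ) := by exact_mod_cast hT
    linarith
  have hT0 : ((T:ℝ) - 1) ≠ 0 := by linarith
  have hq : Tendsto (fun P : ℝ =>
      (Real.sqrt P / ((T : ℝ) - 1)) / (1 + (P - Real.sqrt P))) atTop (nhds 0) := by
    have hu : Tendsto (fun P : ℝ => 2 * (((T:ℝ) - 1) * Real.sqrt P)⁻¹) atTop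
        (nhds (2 * 0)) := by
      have h1 : Tendsto (fun P : ℝ => ((T:ℝ) - 1) * Real.sqrt P) atTop atTop :=
        sqrtAtTop.const_mul_atTop (by linarith)
      exact (h1.inv_tendsto_atTop).const_mul 2
    rw [show (0:ℝ) = 2 * 0 by norm_num]
    apply tendsto_of_tendsto_of_tendsto_of_le_of_le' tendsto_const_nhds hu
    · filter_upwards [eventually_ge_atTop (4:ℝ)] with P hP
      have h0 : (0:ℝ) ≤ P := by linarith
      have hs := Real.sq_sqrt h0
      have hs0 := Real.sqrt_nonneg P
      have hden : (0:ℝ) < 1 + (P - Real.sqrt P) := by nlinarith [sq_nonneg (Real.sqrt P - 2)]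
      have h9 := div_nonneg (div_nonneg hs0 (by linarith : (0:ℝ) ≤ (T:ℝ) - 1)) hden.le
      simpa using h9
    · filter_upwards [eventually_ge_atTop (4:ℝ)] with P hP
      have h0 : (0:ℝ) ≤ P := by linarith
      have hs := Real.sq_sqrt h0
      have hs0 := Real.sqrt_nonneg P
      have hs2 : (2:ℝ) ≤ Real.sqrt P := by nlinarith
      have hden : (0:ℝ) < 1 + (P - Real.sqrt P) := by nlinarith
      have hden2 : (0:ℝ) < ((T:ℝ) - 1) * Real.sqrt P := by nlinarith
      rw [inv_eq_one_div, mul_div_assoc' 2 1, mul_one, div_le_div_iff₀ hden hden2]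
      have e1 : Real.sqrt P / ((T:ℝ) - 1) * (((T:ℝ) - 1) * Real.sqrt P) = P := by
        field_simp
        nlinarith
      rw [e1]
      nlinarith [sq_nonneg (Real.sqrt P - 1)]
  have := (Real.continuousAt_log (by norm_num : (1:ℝ) + 0 ≠ 0)).tendsto.comp
    (tendsto_const_nhds.add hq)
  simpa [Function.comp_def] using this

end Helpers


open Filter MeasureTheory in
/-- Corollary 1, eq. (107): the gap between the upper bound `R⁺(P)` (Theorem 1 evaluated
with Gaussian inputs and optimized power allocations) and the public-discussion achievable
rate `R_PD(P)` (Proposition 1, power split `P₁ = P − √P`, `P₂ = √P/(T−1)`) converges to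
`γ/T` as `P → ∞`, where `γ = ∫ log (1+H₁/G₁) dμ + ∫ log (1+H₂/G₂) dμ`. -/
theorem tendsto_gap_Rplus_RPD_atTop
    {Ω : Type*} [MeasurableSpace Ω] (μ : Measure Ω) [IsProbabilityMeasure μ]
    (H₁ G₁ H₂ G₂ : Ω → ℝ)
    (hH₁m : Measurable H₁) (hG₁m : Measurable G₁)
    (hH₂m : Measurable H₂) (hG₂m : Measurable G₂)
    (hH₁ : ∀ ω, 0 ≤ H₁ ω) (hG₁ : ∀ ω, 0 ≤ G₁ ω)
    (hH₂ : ∀ ω, 0 ≤ H₂ ω) (hG₂ : ∀ ω, 0 ≤ G₂ ω)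
    (hG₁pos : ∀ᵐ ω ∂μ, 0 < G₁ ω) (hG₂pos : ∀ᵐ ω ∂μ, 0 < G₂ ω)
    (hint₁ : Integrable (fun ω => Real.log (1 + H₁ ω / G₁ ω)) μ)
    (hint₂ : Integrable (fun ω => Real.log (1 + H₂ ω / G₂ ω)) μ)
    (hH₁int : Integrable H₁ μ) (hH₂int : Integrable H₂ μ)
    (T : ℕ) (hT : 2 ≤ T) (ρ : ℝ) (hρ : ρ ^ 2 < 1)
    (S₁ S₂ Rplus RPD : ℝ → ℝ)
    (hS₁ : ∀ P : ℝ, S₁ P =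
      sSup {r : ℝ | ∃ f : ℝ → ℝ, Measurable f ∧ (∀ x, 0 ≤ f x) ∧
        (∫ ω, f (H₁ ω) ∂μ) ≤ P ∧
        r = ∫ ω, Real.log (1 + f (H₁ ω) * H₁ ω / (1 + f (H₁ ω) * G₁ ω)) ∂μ})
    (hS₂ : ∀ P : ℝ, S₂ P =
      sSup {r : ℝ | ∃ f : ℝ → ℝ, Measurable f ∧ (∀ x, 0 ≤ f x) ∧
        (∫ ω, f (H₂ ω) ∂μ) ≤ P ∧
        r = ∫ ω, Real.log (1 + f (H₂ ω) * H₂ ω / (1 + f (H₂ ω) * G₂ ω)) ∂μ})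
    (hRplus : ∀ P : ℝ, Rplus P =
      (1 / (T : ℝ)) * (-Real.log (1 - ρ ^ 2)) + S₁ P + S₂ P)
    (hRPD : ∀ P : ℝ, RPD P =
      (1 / (T : ℝ)) *
          (-Real.log (1 - ((P - Real.sqrt P) / ((P - Real.sqrt P) + 1)) ^ 2 * ρ ^ 2)) +
        (((T : ℝ) - 1) / (T : ℝ)) *
          ((∫ ω, Real.log (1 + (Real.sqrt P / ((T : ℝ) - 1)) * H₁ ω /
                (1 + (Real.sqrt P / ((T : ℝ) - 1)) * G₁ ω)) ∂μ) -
            Real.log (1 + (Real.sqrt P / ((T : ℝ) - 1)) / (1 + (P - Real.sqrt P))) +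
            (∫ ω, Real.log (1 + (Real.sqrt P / ((T : ℝ) - 1)) * H₂ ω /
                (1 + (Real.sqrt P / ((T : ℝ) - 1)) * G₂ ω)) ∂μ) -
            Real.log (1 + (Real.sqrt P / ((T : ℝ) - 1)) / (1 + (P - Real.sqrt P))))) :
    Tendsto (fun P : ℝ => Rplus P - RPD P) atTop
      (nhds (((∫ ω, Real.log (1 + H₁ ω / G₁ ω) ∂μ) +
        (∫ ω, Real.log (1 + H₂ ω / G₂ ω) ∂μ)) / (T : ℝ))) := by
  have hT2 : (2:ℝ) ≤ (T:ℝ) := by exact_mod_cast hT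
  have hT0 : (T:ℝ) ≠ 0 := by linarith
  set γ₁ := ∫ ω, Real.log (1 + H₁ ω / G₁ ω) ∂μ with hγ₁
  set γ₂ := ∫ ω, Real.log (1 + H₂ ω / G₂ ω) ∂μ with hγ₂
  have hc : Tendsto (fun P : ℝ => Real.sqrt P / ((T:ℝ) - 1)) atTop atTop :=
    sqrtAtTop.atTop_div_const (by linarith)
  have hS1t : Tendsto S₁ atTop (nhds γ₁) :=
    aux_S_tendsto μ H₁ G₁ hH₁m hG₁m hH₁ hG₁ hG₁pos hint₁ S₁ hS₁
  have hS2t : Tendsto S₂ atTop (nhds γ₂) :=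
    aux_S_tendsto μ H₂ G₂ hH₂m hG₂m hH₂ hG₂ hG₂pos hint₂ S₂ hS₂
  have hI1 : Tendsto (fun P : ℝ => ∫ ω, Real.log (1 + (Real.sqrt P / ((T:ℝ) - 1)) * H₁ ω /
      (1 + (Real.sqrt P / ((T:ℝ) - 1)) * G₁ ω)) ∂μ) atTop (nhds γ₁) :=
    aux_tendsto_integral μ H₁ G₁ hH₁m hG₁m hH₁ hG₁ hG₁pos hint₁ hc
  have hI2 : Tendsto (fun P : ℝ => ∫ ω, Real.log (1 + (Real.sqrt P / ((T:ℝ) - 1)) * H₂ ω /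
      (1 + (Real.sqrt P / ((T:ℝ) - 1)) * G₂ ω)) ∂μ) atTop (nhds γ₂) :=
    aux_tendsto_integral μ H₂ G₂ hH₂m hG₂m hH₂ hG₂ hG₂pos hint₂ hc
  have hA := aux_alpha ρ hρ
  have hB := aux_B T hT
  have big := (((tendsto_const_nhds (x := (1/(T:ℝ)) * (-Real.log (1 - ρ ^ 2)))
      (f := atTop (α := ℝ))).add hS1t).add hS2t).sub
    ((hA.const_mul (1/(T:ℝ))).add
      ((((hI1.sub hB).add hI2).sub hB).const_mul (((T:ℝ) - 1)/(T:ℝ))))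
  have hfun : (fun P : ℝ => Rplus P - RPD P) =
      fun P : ℝ => ((1 / (T : ℝ)) * (-Real.log (1 - ρ ^ 2)) + S₁ P + S₂ P) -
        ((1/(T:ℝ)) *
          (-Real.log (1 - ((P - Real.sqrt P) / ((P - Real.sqrt P) + 1)) ^ 2 * ρ ^ 2)) +
        (((T:ℝ) - 1)/(T:ℝ)) *
          ((∫ ω, Real.log (1 + (Real.sqrt P / ((T:ℝ) - 1)) * H₁ ω /
              (1 + (Real.sqrt P / ((T:ℝ) - 1)) * G₁ ω)) ∂μ) -
            Real.log (1 + (Real.sqrt P / ((T:ℝ) - 1)) / (1 + (P - Real.sqrt P))) +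
            (∫ ω, Real.log (1 + (Real.sqrt P / ((T:ℝ) - 1)) * H₂ ω /
              (1 + (Real.sqrt P / ((T:ℝ) - 1)) * G₂ ω)) ∂μ) -
            Real.log (1 + (Real.sqrt P / ((T:ℝ) - 1)) / (1 + (P - Real.sqrt P))))) := by
    funext P
    rw [hRplus P, hRPD P]
  rw [hfun]
  convert big using 2
  field_simp
  ring
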